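/- Let x ∈ ℝⁿ be nonzero and assume λ₁/λ(x) ≥ 1 − 1/(2δ²). Then λ(x) < λ₂. If in addition u ≥ 1, ν = 1/(4u²δ − 1), and y ∈ ℝⁿ is nonzero with ⟨u₁,y⟩_A > 0, λ(y) < λ₂, and (λ(y) − λ₁)/(λ₂ − λ(y)) ≤ ν·(λ(x) − λ₁)/(λ₂ − λ(x)), then ‖u₁ − y/‖y‖_A‖_A ≤ (1/u)·sin ∠_A(u₁,x). -/

import Mathlib

open Matrix Real

set_option maxHeartbeats 1000000

variable {n : ℕ}


lemma quad_expand {S : Matrix (Fin n) (Fin n) ℝ} (hS : S.IsHermitian) (v : Fin n → ℝ) :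
    v ⬝ᵥ (S *ᵥ v) = ∑ i, hS.eigenvalues i * ((star (hS.eigenvectorUnitary : Matrix (Fin n) (Fin n) ℝ) *ᵥ v) i)^2 := by
  have hsp := hS.spectral_theorem
  calc v ⬝ᵥ (S *ᵥ v)
      = v ⬝ᵥ ((hS.eigenvectorUnitary : Matrix (Fin n) (Fin n) ℝ) *ᵥ
          ((diagonal (RCLike.ofReal ∘ hS.eigenvalues) * star (hS.eigenvectorUnitary : Matrix (Fin n) (Fin n) ℝ)) *ᵥ v)) := by
        conv_lhs => rw [hsp, Unitary.conjStarAlgAut_apply]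
        rw [mulVec_mulVec, Matrix.mul_assoc]
    _ = ((hS.eigenvectorUnitary : Matrix (Fin n) (Fin n) ℝ)ᵀ *ᵥ v) ⬝ᵥ
          ((diagonal (RCLike.ofReal ∘ hS.eigenvalues)) *ᵥ (star (hS.eigenvectorUnitary : Matrix (Fin n) (Fin n) ℝ) *ᵥ v)) := by
        rw [dotProduct_mulVec, ← mulVec_transpose, ← mulVec_mulVec]
    _ = (star (hS.eigenvectorUnitary : Matrix (Fin n) (Fin n) ℝ) *ᵥ v) ⬝ᵥ
          ((diagonal hS.eigenvalues) *ᵥ (star (hS.eigenvectorUnitary : Matrix (Fin n) (Fin n) ℝ) *ᵥ v)) := by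
        rw [star_eq_conjTranspose, conjTranspose_eq_transpose_of_trivial, RCLike.ofReal_real_eq_id]
        simp
    _ = ∑ i, hS.eigenvalues i * ((star (hS.eigenvectorUnitary : Matrix (Fin n) (Fin n) ℝ) *ᵥ v) i)^2 := by
        simp only [dotProduct, mulVec_diagonal]
        exact Finset.sum_congr rfl fun i _ => by ring

lemma unitary_dot {S : Matrix (Fin n) (Fin n) ℝ} (hS : S.IsHermitian) (v : Fin n → ℝ) :
    (star (hS.eigenvectorUnitary : Matrix (Fin n) (Fin n) ℝ) *ᵥ v) ⬝ᵥ
      (star (hS.eigenvectorUnitary : Matrix (Fin n) (Fin n) ℝ) *ᵥ v) = v ⬝ᵥ v := by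
  rw [dotProduct_mulVec, ← mulVec_transpose]
  have : ((star (hS.eigenvectorUnitary : Matrix (Fin n) (Fin n) ℝ))ᵀ) = (hS.eigenvectorUnitary : Matrix (Fin n) (Fin n) ℝ) := by
    rw [star_eq_conjTranspose, conjTranspose_eq_transpose_of_trivial, transpose_transpose]
  rw [this, mulVec_mulVec]
  have h1 : (hS.eigenvectorUnitary : Matrix (Fin n) (Fin n) ℝ) * star (hS.eigenvectorUnitary : Matrix (Fin n) (Fin n) ℝ) = 1 :=
    Unitary.coe_mul_star_self _
  rw [h1, one_mulVec]

lemma comp_eq {S : Matrix (Fin n) (Fin n) ℝ} (hS : S.IsHermitian) (v : Fin n → ℝ) (i : Fin n) :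
    (star (hS.eigenvectorUnitary : Matrix (Fin n) (Fin n) ℝ) *ᵥ v) i = ⇑(hS.eigenvectorBasis i) ⬝ᵥ v := by
  simp [mulVec, dotProduct, hS.eigenvectorUnitary_apply]

lemma symdot {M : Matrix (Fin n) (Fin n) ℝ} (hM : Mᵀ = M) (a b : Fin n → ℝ) :
    (M *ᵥ a) ⬝ᵥ b = a ⬝ᵥ (M *ᵥ b) := by
  rw [dotProduct_comm, dotProduct_mulVec, ← mulVec_transpose, hM, dotProduct_comm]

open scoped MatrixOrder in
lemma pencil_facts (A E : Matrix (Fin n) (Fin n) ℝ) (hA : A.PosDef) (hE : E.PosDef)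
    (lam1 lam2 : ℝ) (u1 : Fin n → ℝ)
    (hu1 : A.mulVec u1 = lam1 • E.mulVec u1)
    (h1pos : 0 < lam1) (h12 : lam1 < lam2)
    (hsimple : ∀ v : Fin n → ℝ, A.mulVec v = lam1 • E.mulVec v → ∃ c : ℝ, v = c • u1)
    (hmin : ∀ μ : ℝ, (∃ v : Fin n → ℝ, v ≠ 0 ∧ A.mulVec v = μ • E.mulVec v) →
      μ = lam1 ∨ lam2 ≤ μ) :
    (∀ z : Fin n → ℝ, lam1 * (E *ᵥ z ⬝ᵥ z) ≤ A *ᵥ z ⬝ᵥ z) ∧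
    (∀ z : Fin n → ℝ, A *ᵥ u1 ⬝ᵥ z = 0 → lam2 * (E *ᵥ z ⬝ᵥ z) ≤ A *ᵥ z ⬝ᵥ z) := by
  classical
  set R := CFC.sqrt E with hRdef
  have hRR : R * R = E := CFC.sqrt_mul_sqrt_self E hE.posSemidef.nonneg
  have hRherm : R.IsHermitian := (CFC.sqrt_nonneg E).posSemidef.1
  have hRsym : Rᵀ = R := (by simpa using hRherm : R.IsSymm).eq
  have hdetR : IsUnit R.det := by
    have h1 : R.det * R.det = E.det := by rw [← det_mul, hRR]
    have h2 : (0:ℝ) < E.det := hE.det_pos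
    have : R.det ≠ 0 := by intro h; rw [h] at h1; simp at h1; nlinarith
    exact isUnit_iff_ne_zero.2 this
  have hRRi : R * R⁻¹ = 1 := mul_nonsing_inv R hdetR
  have hRiR : R⁻¹ * R = 1 := nonsing_inv_mul R hdetR
  have hRisym : (R⁻¹)ᵀ = R⁻¹ := by rw [transpose_nonsing_inv, hRsym]
  have hAsym : Aᵀ = A := (by simpa using hA.1 : A.IsSymm).eq
  have hEsym : Eᵀ = E := (by simpa using hE.1 : E.IsSymm).eq
  set S := R⁻¹ * A * R⁻¹ with hSdef
  have hS : S.IsHermitian := by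
    have h : Sᵀ = S := by
      rw [hSdef, transpose_mul, transpose_mul, hRisym, hAsym, Matrix.mul_assoc]
    rw [Matrix.IsHermitian]
    simpa using h
  have key1 : ∀ z : Fin n → ℝ, (R *ᵥ z) ⬝ᵥ (R *ᵥ z) = E *ᵥ z ⬝ᵥ z := by
    intro z
    rw [symdot hRsym, mulVec_mulVec, hRR, dotProduct_comm]
  have key2 : ∀ z : Fin n → ℝ, (R *ᵥ z) ⬝ᵥ (S *ᵥ (R *ᵥ z)) = A *ᵥ z ⬝ᵥ z := by
    intro z
    have h1 : S *ᵥ (R *ᵥ z) = R⁻¹ *ᵥ (A *ᵥ z) := by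
      rw [mulVec_mulVec, hSdef, Matrix.mul_assoc, Matrix.mul_assoc, hRiR, Matrix.mul_one,
        ← mulVec_mulVec]
    rw [h1, symdot hRsym, mulVec_mulVec, hRRi, one_mulVec, dotProduct_comm]
  have heig : ∀ i : Fin n, S *ᵥ ⇑(hS.eigenvectorBasis i) = hS.eigenvalues i • ⇑(hS.eigenvectorBasis i) :=
    fun i => hS.mulVec_eigenvectorBasis i
  have hbne : ∀ i : Fin n, (⇑(hS.eigenvectorBasis i) : Fin n → ℝ) ≠ 0 := by
    intro i h
    have h1 : ‖hS.eigenvectorBasis i‖ = 1 := hS.eigenvectorBasis.orthonormal.1 i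
    have h2 : hS.eigenvectorBasis i = 0 := by
      ext j; exact congrFun h j
    rw [h2] at h1; simp at h1
  have hbrec : ∀ i : Fin n, R *ᵥ (R⁻¹ *ᵥ ⇑(hS.eigenvectorBasis i)) = ⇑(hS.eigenvectorBasis i) := by
    intro i
    rw [mulVec_mulVec, hRRi, one_mulVec]
  have hpencil : ∀ i : Fin n, A *ᵥ (R⁻¹ *ᵥ ⇑(hS.eigenvectorBasis i))
      = hS.eigenvalues i • (E *ᵥ (R⁻¹ *ᵥ ⇑(hS.eigenvectorBasis i))) := by
    intro i
    have h2 : E *ᵥ (R⁻¹ *ᵥ ⇑(hS.eigenvectorBasis i)) = R *ᵥ ⇑(hS.eigenvectorBasis i) := by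
      rw [mulVec_mulVec, ← hRR, Matrix.mul_assoc, hRRi, Matrix.mul_one]
    have hmat : R * S = A * R⁻¹ := by
      rw [hSdef, ← Matrix.mul_assoc, ← Matrix.mul_assoc, hRRi, Matrix.one_mul]
    have h3 : A *ᵥ (R⁻¹ *ᵥ ⇑(hS.eigenvectorBasis i)) = R *ᵥ (S *ᵥ ⇑(hS.eigenvectorBasis i)) := by
      rw [mulVec_mulVec, mulVec_mulVec, hmat]
    rw [h3, heig i, mulVec_smul, h2]
  have hzne : ∀ i : Fin n, (R⁻¹ *ᵥ ⇑(hS.eigenvectorBasis i)) ≠ 0 := by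
    intro i h
    apply hbne i
    rw [← hbrec i, h, mulVec_zero]
  have hmu : ∀ i : Fin n, hS.eigenvalues i = lam1 ∨ lam2 ≤ hS.eigenvalues i :=
    fun i => hmin _ ⟨_, hzne i, hpencil i⟩
  have hmu1 : ∀ i : Fin n, lam1 ≤ hS.eigenvalues i := by
    intro i
    rcases hmu i with h | h
    · exact h.ge
    · linarith
  constructor
  · intro z
    rw [← key2 z, ← key1 z, quad_expand hS (R *ᵥ z), ← unitary_dot hS (R *ᵥ z), dotProduct,
      Finset.mul_sum]
    apply Finset.sum_le_sum
    intro i _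
    nlinarith [hmu1 i, sq_nonneg ((star (hS.eigenvectorUnitary : Matrix (Fin n) (Fin n) ℝ) *ᵥ (R *ᵥ z)) i)]
  · intro z hz
    rw [← key2 z, ← key1 z, quad_expand hS (R *ᵥ z), ← unitary_dot hS (R *ᵥ z), dotProduct,
      Finset.mul_sum]
    apply Finset.sum_le_sum
    intro i _
    rcases hmu i with h | h
    · -- lam1-eigenvector component vanishes
      have hv0 : (star (hS.eigenvectorUnitary : Matrix (Fin n) (Fin n) ℝ) *ᵥ (R *ᵥ z)) i = 0 := by
        rw [comp_eq hS (R *ᵥ z) i]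
        obtain ⟨c, hc⟩ := hsimple (R⁻¹ *ᵥ ⇑(hS.eigenvectorBasis i)) (by rw [hpencil i, h])
        have hb : (⇑(hS.eigenvectorBasis i) : Fin n → ℝ) = R *ᵥ (c • u1) := by
          rw [← hbrec i, hc]
        rw [hb, mulVec_smul, smul_dotProduct, symdot hRsym, mulVec_mulVec, hRR, smul_eq_mul]
        have hEu : E *ᵥ u1 = lam1⁻¹ • (A *ᵥ u1) := by
          rw [hu1, smul_smul, inv_mul_cancel₀ h1pos.ne', one_smul]
        have : u1 ⬝ᵥ (E *ᵥ z) = (E *ᵥ u1) ⬝ᵥ z := (symdot hEsym u1 z).symm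
        rw [this, hEu, smul_dotProduct, hz, smul_eq_mul, mul_zero, mul_zero]
      rw [hv0]
      simp
    · nlinarith [sq_nonneg ((star (hS.eigenvectorUnitary : Matrix (Fin n) (Fin n) ℝ) *ᵥ (R *ᵥ z)) i)]

set_option maxHeartbeats 1000000

lemma final_algebra (lam1 lam2 δ u ax ex ay ey p px : ℝ)
    (h1pos : 0 < lam1) (h12 : lam1 < lam2) (hδ1 : 1 < δ)
    (hδE : lam2 ≤ δ * (lam2 - lam1))
    (hu : 1 ≤ u)
    (hax : 0 < ax) (hex : 0 < ex) (hay : 0 < ay) (hey : 0 < ey) (hp0 : 0 < p)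
    (hX : (2*δ^2 - 1) * ax ≤ 2*δ^2 * (lam1 * ex))
    (hlx' : ax < lam2 * ex) (hly' : ay < lam2 * ey)
    (hAy : lam1 * ey ≤ ay) (hAx : lam1 * ex ≤ ax)
    (hx2 : px^2 ≤ lam1 * ex)
    (hTnn : 0 ≤ ay - p^2)
    (hByp : lam2 * (lam1 * ey - p^2) ≤ lam1 * (ay - p^2))
    (hP : (ay - lam1*ey) * ((4*u^2*δ - 1) * (lam2*ex - ax)) ≤ (ax - lam1*ex) * (lam2*ey - ay)) :
    Real.sqrt (2 - 2*(p/Real.sqrt ay)) ≤ (1/u) * Real.sqrt (1 - (px/Real.sqrt ax)^2) := by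
  have h2pos : (0:ℝ) < lam2 := lt_trans h1pos h12
  have hu0 : (0:ℝ) < u := by linarith
  have hu2 : (1:ℝ) ≤ u^2 := by nlinarith only [hu]
  have hnu0 : (0:ℝ) < 4*u^2*δ - 1 := by nlinarith only [hu2, hδ1]
  have h2δ1 : (0:ℝ) < 2*δ - 1 := by linarith
  have h8 : (0:ℝ) < 2*δ^2 - 1 := by nlinarith only [hδ1]
  have sy0 : (0:ℝ) < Real.sqrt ay := Real.sqrt_pos.2 hay
  have sx0 : (0:ℝ) < Real.sqrt ax := Real.sqrt_pos.2 hax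
  have hsy2 : (Real.sqrt ay)^2 = ay := Real.sq_sqrt hay.le
  have hsx2 : (Real.sqrt ax)^2 = ax := Real.sq_sqrt hax.le
  have hdx0 : (0:ℝ) < lam2*ex - ax := by linarith
  have hdy0 : (0:ℝ) < lam2*ey - ay := by linarith
  have haxl : (0:ℝ) ≤ ax - lam1*ex := by linarith
  have hayl : (0:ℝ) ≤ ay - lam1*ey := by linarith
  have hd3 : 2*δ*lam2 ≤ 2*δ^2*(lam2-lam1) := by
    nlinarith only [mul_le_mul_of_nonneg_left hδE (by linarith : (0:ℝ) ≤ 2*δ)]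
  have hStep1 : (ay - p^2)*(lam2 - lam1) ≤ lam2*(ay - lam1*ey) := by nlinarith only [hByp]
  have hStep3 : lam1*(lam2*ey - ay) ≤ ay*(lam2 - lam1) := by
    nlinarith only [mul_le_mul_of_nonneg_left hAy h2pos.le, h1pos]
  have G1 : (ay - p^2)*(lam1*((4*u^2*δ - 1)*(lam2*ex - ax))) ≤ lam2*((ax - lam1*ex)*ay) := by
    have hM : (0:ℝ) ≤ lam1*((4*u^2*δ - 1)*(lam2*ex - ax)) := by positivity
    have C1 := mul_le_mul_of_nonneg_right hStep1 hM
    have C2 := mul_le_mul_of_nonneg_left hP (by positivity : (0:ℝ) ≤ lam1*lam2)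
    have C3 := mul_le_mul_of_nonneg_left hStep3 (by positivity : (0:ℝ) ≤ lam2*(ax - lam1*ex))
    have G1' : (ay - p^2)*(lam1*((4*u^2*δ - 1)*(lam2*ex - ax)))*(lam2 - lam1)
        ≤ lam2*((ax - lam1*ex)*ay)*(lam2 - lam1) := by nlinarith only [C1, C2, C3]
    exact le_of_mul_le_mul_right G1' (by linarith)
  have hE' : lam2*ex*(2*δ - 1) ≤ (2*δ^2 - 1)*(lam2*ex - ax) := by
    nlinarith only [hX, mul_le_mul_of_nonneg_left hd3 hex.le]
  have hD' : (2*δ^2 - 1)*(ax - lam1*ex) ≤ lam1*ex := by nlinarith only [hX]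
  have hNum : 20*u^2*δ^2 ≤ 9*((4*u^2*δ - 1)*(2*δ - 1)) := by
    nlinarith only [mul_nonneg (by nlinarith only [hu2] : (0:ℝ) ≤ u^2 - 1) (sq_nonneg δ),
      mul_nonneg (by nlinarith only [hu2] : (0:ℝ) ≤ u^2 - 1) (by linarith : (0:ℝ) ≤ δ),
      sq_nonneg (4*δ - 3), hδ1, hu2]
  have hS' : 10*u^2*lam2*ax*(2*δ^2 - 1) ≤ 9*lam1*((4*u^2*δ - 1)*(lam2*ex - ax))*(2*δ^2 - 1) := by
    nlinarith only [mul_le_mul_of_nonneg_left hX (by positivity : (0:ℝ) ≤ 10*u^2*lam2),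
      mul_le_mul_of_nonneg_left hNum (by positivity : (0:ℝ) ≤ lam1*lam2*ex),
      mul_le_mul_of_nonneg_left hE' (by positivity : (0:ℝ) ≤ 9*lam1*(4*u^2*δ - 1))]
  have hS : 10*u^2*lam2*ax ≤ 9*lam1*((4*u^2*δ - 1)*(lam2*ex - ax)) :=
    le_of_mul_le_mul_right hS' h8
  have hfinal9 : 10*u^2*ax*(ay - p^2) ≤ 9*(ay*(ax - lam1*ex)) := by
    have c1 := mul_le_mul_of_nonneg_right hS hTnn
    have c2 := mul_le_mul_of_nonneg_left G1 (by norm_num : (0:ℝ) ≤ 9)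
    have c3 : 10*u^2*ax*(ay - p^2)*lam2 ≤ 9*(ay*(ax - lam1*ex))*lam2 := by
      nlinarith only [c1, c2]
    exact le_of_mul_le_mul_right c3 h2pos
  have hT1' : (ay - p^2)*((4*u^2*δ - 1)*(2*δ - 1)) ≤ ay := by
    have c4 := mul_le_mul_of_nonneg_right G1 h8.le
    have c5 := mul_le_mul_of_nonneg_left hD' (by positivity : (0:ℝ) ≤ lam2*ay)
    have c6 := mul_le_mul_of_nonneg_left hE'
      (by positivity : (0:ℝ) ≤ (ay - p^2)*(4*u^2*δ - 1)*lam1)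
    have c7 : (ay - p^2)*((4*u^2*δ - 1)*(2*δ - 1))*(lam1*lam2*ex) ≤ ay*(lam1*lam2*ex) := by
      nlinarith only [c4, c5, c6]
    exact le_of_mul_le_mul_right c7 (by positivity)
  have hfac3 : (3:ℝ) ≤ (4*u^2*δ - 1)*(2*δ - 1) := by
    have g1 : (0:ℝ) ≤ (u^2 - 1)*(4*δ*(2*δ - 1)) :=
      mul_nonneg (by linarith) (by nlinarith only [hδ1])
    have g2 : (0:ℝ) ≤ (δ - 1)*(8*δ + 2) := mul_nonneg (by linarith) (by linarith)
    nlinarith only [g1, g2]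
  have hT3 : 3*(ay - p^2) ≤ ay := by
    nlinarith only [mul_le_mul_of_nonneg_left hfac3 hTnn, hT1']
  have hpc : 4/5*Real.sqrt ay ≤ p := by
    nlinarith only [hT3, hsy2, hp0, sy0, mul_pos hp0 sy0]
  have hpsy : p ≤ Real.sqrt ay := by
    nlinarith only [hTnn, hsy2, hp0, sy0]
  have h2q : 2 - 2*(p/Real.sqrt ay) ≤ (10/9)*((ay - p^2)/ay) := by
    have e1 : (ay - p^2)/ay = 1 - (p/Real.sqrt ay)^2 := by
      rw [div_pow, hsy2]; field_simp
    rw [e1]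
    have hq45 : (4:ℝ)/5 ≤ p/Real.sqrt ay := (le_div_iff₀ sy0).2 (by linarith)
    have hq1 : p/Real.sqrt ay ≤ 1 := (div_le_one sy0).2 hpsy
    nlinarith only [hq45, hq1]
  have h9 : (10/9)*((ay - p^2)/ay)*(u^2*ax) ≤ ax - lam1*ex := by
    rw [show (10/9)*((ay - p^2)/ay)*(u^2*ax) = (10*u^2*ax*(ay - p^2))/(9*ay) by
      field_simp]
    rw [div_le_iff₀ (by positivity)]
    nlinarith only [hfinal9, haxl, hay]
  have hmain : (2 - 2*(p/Real.sqrt ay))*(u^2*ax) ≤ ax - px^2 := by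
    have hh := mul_le_mul_of_nonneg_right h2q (by positivity : (0:ℝ) ≤ u^2*ax)
    nlinarith only [hh, h9, hx2]
  have hstar : 2 - 2*(p/Real.sqrt ay) ≤ (1/u^2)*(1 - (px/Real.sqrt ax)^2) := by
    have e2 : (1/u^2)*(1 - (px/Real.sqrt ax)^2) = (ax - px^2)/(u^2*ax) := by
      rw [div_pow, hsx2]; field_simp
    rw [e2, le_div_iff₀ (by positivity)]
    exact hmain
  calc Real.sqrt (2 - 2*(p/Real.sqrt ay))
      ≤ Real.sqrt ((1/u^2)*(1 - (px/Real.sqrt ax)^2)) := Real.sqrt_le_sqrt hstar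
    _ = (1/u) * Real.sqrt (1 - (px/Real.sqrt ax)^2) := by
        rw [Real.sqrt_mul (by positivity), one_div, Real.sqrt_inv, Real.sqrt_sq hu0.le, one_div]


/-- Euclidean inner product weighted by the matrix `A`: `⟨x,y⟩_A = ⟨Ax,y⟩`. -/
noncomputable def ipA {n : ℕ} (A : Matrix (Fin n) (Fin n) ℝ) (x y : Fin n → ℝ) : ℝ :=
  A.mulVec x ⬝ᵥ y

/-- The `A`-norm `‖x‖_A = √⟨Ax,x⟩`. -/
noncomputable def normA {n : ℕ} (A : Matrix (Fin n) (Fin n) ℝ) (x : Fin n → ℝ) : ℝ :=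
  Real.sqrt (ipA A x x)

/-- The `A`-angle `∠_A(u,x) ∈ [0,π]`. -/
noncomputable def angleA {n : ℕ} (A : Matrix (Fin n) (Fin n) ℝ) (u x : Fin n → ℝ) : ℝ :=
  Real.arccos (ipA A u x / (normA A u * normA A x))

/-- The generalized Rayleigh quotient `λ(x) = ⟨Ax,x⟩/⟨Ex,x⟩`. -/
noncomputable def rayleigh {n : ℕ} (A E : Matrix (Fin n) (Fin n) ℝ) (x : Fin n → ℝ) : ℝ :=
  (A.mulVec x ⬝ᵥ x) / (E.mulVec x ⬝ᵥ x)

/-- The residual `r(x) = Ax − λ(x)·Ex`. -/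
noncomputable def residualA {n : ℕ} (A E : Matrix (Fin n) (Fin n) ℝ) (x : Fin n → ℝ) :
    Fin n → ℝ :=
  A.mulVec x - rayleigh A E x • E.mulVec x

/-- The normalized residual `ρ(x) = ‖r(x)‖_{A⁻¹} / ‖x‖_A`. -/
noncomputable def rhoRes {n : ℕ} (A E : Matrix (Fin n) (Fin n) ℝ) (x : Fin n → ℝ) : ℝ :=
  Real.sqrt (A⁻¹.mulVec (residualA A E x) ⬝ᵥ residualA A E x) / normA A x

/-- Lemma `rankoptaprior`: eigenvalue improvement implies eigenvector improvement. -/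
theorem eigenvalue_reduction_implies_eigenvector_reduction
    {n : ℕ} (hn : 1 ≤ n)
    (A E : Matrix (Fin n) (Fin n) ℝ) (hA : A.PosDef) (hE : E.PosDef)
    (lam1 lam2 : ℝ) (u1 : Fin n → ℝ)
    (hu1 : A.mulVec u1 = lam1 • E.mulVec u1) (hu1ne : u1 ≠ 0) (hu1norm : normA A u1 = 1)
    (h1pos : 0 < lam1) (h12 : lam1 < lam2)
    (hsimple : ∀ v : Fin n → ℝ, A.mulVec v = lam1 • E.mulVec v → ∃ c : ℝ, v = c • u1)
    (hlam2 : ∃ v : Fin n → ℝ, v ≠ 0 ∧ A.mulVec v = lam2 • E.mulVec v)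
    (hmin : ∀ μ : ℝ, (∃ v : Fin n → ℝ, v ≠ 0 ∧ A.mulVec v = μ • E.mulVec v) →
      μ = lam1 ∨ lam2 ≤ μ)
    (δ : ℝ) (hδ : δ ≥ lam2 / (lam2 - lam1))
    (x : Fin n → ℝ) (hx : x ≠ 0)
    (hrayx : lam1 / rayleigh A E x ≥ 1 - 1 / (2 * δ ^ 2)) :
    rayleigh A E x < lam2 ∧
      ∀ u : ℝ, u ≥ 1 →
        ∀ y : Fin n → ℝ, y ≠ 0 → 0 < ipA A u1 y → rayleigh A E y < lam2 →
          (rayleigh A E y - lam1) / (lam2 - rayleigh A E y) ≤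
            (1 / (4 * u ^ 2 * δ - 1)) *
              ((rayleigh A E x - lam1) / (lam2 - rayleigh A E x)) →
          normA A (u1 - (normA A y)⁻¹ • y) ≤ (1 / u) * Real.sin (angleA A u1 x) := by
  obtain ⟨factA, factB⟩ := pencil_facts A E hA hE lam1 lam2 u1 hu1 h1pos h12 hsimple hmin
  have hAsym : Aᵀ = A := (by simpa using hA.1 : A.IsSymm).eq
  have hEsym : Eᵀ = E := (by simpa using hE.1 : E.IsSymm).eq
  have h2pos : (0:ℝ) < lam2 := lt_trans h1pos h12
  have hδ1 : (1:ℝ) < δ := by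
    have h : (1:ℝ) < lam2 / (lam2 - lam1) := (one_lt_div (by linarith)).2 (by linarith)
    linarith
  have hδE : lam2 ≤ δ * (lam2 - lam1) := by
    have := (div_le_iff₀ (by linarith : (0:ℝ) < lam2 - lam1)).1 hδ
    linarith
  have hax : 0 < A *ᵥ x ⬝ᵥ x := by simpa [dotProduct_comm] using hA.dotProduct_mulVec_pos hx
  have hex : 0 < E *ᵥ x ⬝ᵥ x := by simpa [dotProduct_comm] using hE.dotProduct_mulVec_pos hx
  set ax := A *ᵥ x ⬝ᵥ x with hax_def
  set ex := E *ᵥ x ⬝ᵥ x with hex_def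
  simp only [rayleigh] at hrayx
  rw [← hax_def, ← hex_def] at hrayx
  have hxe : 0 < ax / ex := div_pos hax hex
  have h1' : (1 - 1/(2*δ^2)) * (ax/ex) ≤ lam1 := (le_div_iff₀ hxe).1 hrayx
  have h2' : (1 - 1/(2*δ^2)) * ax ≤ lam1 * ex := by
    have h2 := mul_le_mul_of_nonneg_right h1' hex.le
    rwa [mul_assoc, div_mul_cancel₀ _ hex.ne'] at h2
  have hd2 : (0:ℝ) < 2*δ^2 := by positivity
  have hX : (2*δ^2 - 1) * ax ≤ 2*δ^2 * (lam1 * ex) := by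
    rw [show (1 - 1/(2*δ^2)) = (2*δ^2-1)/(2*δ^2) by field_simp] at h2'
    rw [div_mul_eq_mul_div, div_le_iff₀ hd2] at h2'
    nlinarith [h2']
  have hd3 : 2*δ*lam2 ≤ 2*δ^2*(lam2-lam1) := by
    nlinarith [mul_le_mul_of_nonneg_left hδE (by linarith : (0:ℝ) ≤ 2*δ)]
  have h8 : (0:ℝ) < 2*δ^2 - 1 := by nlinarith [hδ1]
  have hlx' : ax < lam2 * ex := by
    have h5 : ex * (2*δ^2*(lam2-lam1) - lam2) ≤ (2*δ^2-1)*(lam2*ex - ax) := by nlinarith [hX]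
    have h6 : 0 < ex * (2*δ^2*(lam2-lam1) - lam2) := by
      apply mul_pos hex
      nlinarith [hd3, h2pos, hδ1]
    have h7 : 0 < (2*δ^2-1)*(lam2*ex - ax) := lt_of_lt_of_le h6 h5
    nlinarith [h7, h8]
  have part1 : rayleigh A E x < lam2 := by
    simp only [rayleigh]
    rw [← hax_def, ← hex_def, div_lt_iff₀ hex]
    exact hlx'
  refine ⟨part1, ?_⟩
  intro u hu y hy hpy hly hhyp
  have hay : 0 < A *ᵥ y ⬝ᵥ y := by simpa [dotProduct_comm] using hA.dotProduct_mulVec_pos hy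
  have hey : 0 < E *ᵥ y ⬝ᵥ y := by simpa [dotProduct_comm] using hE.dotProduct_mulVec_pos hy
  simp only [rayleigh] at hly hhyp
  simp only [ipA] at hpy
  set ay := A *ᵥ y ⬝ᵥ y with hay_def
  set ey := E *ᵥ y ⬝ᵥ y with hey_def
  set p := A *ᵥ u1 ⬝ᵥ y with hp_def
  set px := A *ᵥ u1 ⬝ᵥ x with hpx_def
  rw [← hax_def, ← hex_def] at hhyp
  have hu0 : (0:ℝ) < u := by linarith
  have hnu0 : (0:ℝ) < 4*u^2*δ - 1 := by nlinarith [hu]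
  have hsymA : ∀ a b : Fin n → ℝ, A *ᵥ a ⬝ᵥ b = A *ᵥ b ⬝ᵥ a := fun a b => by
    rw [symdot hAsym, dotProduct_comm]
  have hsymE : ∀ a b : Fin n → ℝ, E *ᵥ a ⬝ᵥ b = E *ᵥ b ⬝ᵥ a := fun a b => by
    rw [symdot hEsym, dotProduct_comm]
  have hau1 : A *ᵥ u1 ⬝ᵥ u1 = 1 := by
    have h0 : 0 ≤ A *ᵥ u1 ⬝ᵥ u1 := by simpa [dotProduct_comm] using hA.posSemidef.dotProduct_mulVec_nonneg u1
    have h1 : Real.sqrt (A *ᵥ u1 ⬝ᵥ u1) = 1 := hu1norm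
    have h2 := Real.sq_sqrt h0
    rw [h1] at h2
    simpa using h2.symm
  -- eigen relations
  have hAEy : lam1 * (E *ᵥ u1 ⬝ᵥ y) = p := by
    have := congrArg (fun v => v ⬝ᵥ y) hu1
    simp only [smul_dotProduct, smul_eq_mul] at this
    rw [hp_def]; exact this.symm
  have hAEu1 : lam1 * (E *ᵥ u1 ⬝ᵥ u1) = 1 := by
    have := congrArg (fun v => v ⬝ᵥ u1) hu1
    simp only [smul_dotProduct, smul_eq_mul] at this
    rw [← hau1]; exact this.symm
  have hAEx : lam1 * (E *ᵥ u1 ⬝ᵥ x) = px := by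
    have := congrArg (fun v => v ⬝ᵥ x) hu1
    simp only [smul_dotProduct, smul_eq_mul] at this
    rw [hpx_def]; exact this.symm
  -- the A-orthogonal complement vector for y
  have horth : A *ᵥ u1 ⬝ᵥ (y - p • u1) = 0 := by
    rw [dotProduct_sub, dotProduct_smul, smul_eq_mul, hau1, ← hp_def]; ring
  have hAw : A *ᵥ (y - p • u1) ⬝ᵥ (y - p • u1) = ay - p^2 := by
    simp only [mulVec_sub, mulVec_smul, sub_dotProduct, dotProduct_sub, smul_dotProduct,
      dotProduct_smul, smul_eq_mul]
    rw [hsymA y u1, ← hp_def, ← hay_def, hau1]; ring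
  have hEw : lam1 * (E *ᵥ (y - p • u1) ⬝ᵥ (y - p • u1)) = lam1*ey - p^2 := by
    simp only [mulVec_sub, mulVec_smul, sub_dotProduct, dotProduct_sub, smul_dotProduct,
      dotProduct_smul, smul_eq_mul]
    rw [hsymE y u1, ← hey_def]
    linear_combination (-2*p)*hAEy + p^2*hAEu1
  have hTnn : 0 ≤ ay - p^2 := by
    rw [← hAw]; simpa [dotProduct_comm] using hA.posSemidef.dotProduct_mulVec_nonneg (y - p • u1)
  have hByp : lam2 * (lam1 * ey - p^2) ≤ lam1 * (ay - p^2) := by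
    have hB := factB (y - p • u1) horth
    rw [hAw] at hB
    nlinarith [mul_le_mul_of_nonneg_left hB h1pos.le, hEw]
  -- x-side small fact
  have hEwx : lam1 * (E *ᵥ (x - px • u1) ⬝ᵥ (x - px • u1)) = lam1*ex - px^2 := by
    simp only [mulVec_sub, mulVec_smul, sub_dotProduct, dotProduct_sub, smul_dotProduct,
      dotProduct_smul, smul_eq_mul]
    rw [hsymE x u1, ← hex_def]
    linear_combination (-2*px)*hAEx + px^2*hAEu1
  have hx2 : px^2 ≤ lam1 * ex := by
    have h0 : 0 ≤ E *ᵥ (x - px • u1) ⬝ᵥ (x - px • u1) := by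
      simpa [dotProduct_comm] using hE.posSemidef.dotProduct_mulVec_nonneg (x - px • u1)
    nlinarith [mul_le_mul_of_nonneg_left h0 h1pos.le, hEwx]
  have hAy : lam1 * ey ≤ ay := factA y
  have hAx : lam1 * ex ≤ ax := factA x
  have hly' : ay < lam2 * ey := by
    rw [div_lt_iff₀ hey] at hly; linarith [hly]
  have hdy0 : (0:ℝ) < lam2*ey - ay := by linarith
  have hdx0 : (0:ℝ) < lam2*ex - ax := by linarith
  -- convert the hypothesis into polynomial form
  have hdyq : 0 < lam2 - ay/ey := by rw [sub_pos, div_lt_iff₀ hey]; linarith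
  have hdxq : 0 < lam2 - ax/ex := by rw [sub_pos, div_lt_iff₀ hex]; linarith
  have eL : (ay/ey - lam1)/(lam2 - ay/ey) = (ay - lam1*ey)/(lam2*ey - ay) := by
    rw [div_eq_div_iff (ne_of_gt hdyq) (ne_of_gt hdy0)]
    field_simp
  have eR : (ax/ex - lam1)/(lam2 - ax/ex) = (ax - lam1*ex)/(lam2*ex - ax) := by
    rw [div_eq_div_iff (ne_of_gt hdxq) (ne_of_gt hdx0)]
    field_simp
  rw [eL, eR, div_mul_div_comm, one_mul] at hhyp
  have hP : (ay - lam1*ey) * ((4*u^2*δ - 1) * (lam2*ex - ax)) ≤ (ax - lam1*ex) * (lam2*ey - ay) :=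
    (div_le_div_iff₀ hdy0 (mul_pos hnu0 hdx0)).1 hhyp
  -- reduce the goal
  have hkey := final_algebra lam1 lam2 δ u ax ex ay ey p px h1pos h12 hδ1 hδE hu hax hex hay hey
    hpy hX hlx' hly' hAy hAx hx2 hTnn hByp hP
  have hny : normA A y = Real.sqrt ay := rfl
  have hinner : ipA A (u1 - (Real.sqrt ay)⁻¹ • y) (u1 - (Real.sqrt ay)⁻¹ • y)
      = 2 - 2*(p/Real.sqrt ay) := by
    have hs2 : Real.sqrt ay * Real.sqrt ay = ay := Real.mul_self_sqrt hay.le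
    have hsne : Real.sqrt ay ≠ 0 := ne_of_gt (Real.sqrt_pos.2 hay)
    simp only [ipA, mulVec_sub, mulVec_smul, sub_dotProduct, dotProduct_sub, smul_dotProduct,
      dotProduct_smul, smul_eq_mul]
    rw [hsymA y u1, ← hp_def, ← hay_def, hau1]
    field_simp
    linear_combination -hs2
  have hlhs : normA A (u1 - (normA A y)⁻¹ • y) = Real.sqrt (2 - 2*(p/Real.sqrt ay)) := by
    rw [hny, normA, hinner]
  have hrhs : Real.sin (angleA A u1 x) = Real.sqrt (1 - (px/Real.sqrt ax)^2) := by
    rw [angleA, hu1norm, one_mul, Real.sin_arccos]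
    rfl
  rw [hlhs, hrhs]
  exact hkey
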